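/- Suppose for each 0 ≤ i ≤ m we are given a statistic S_i : ⋃_{n≥0} PK(n) → ℕ and a constant c_i ∈ ℕ such that (i) #{p ∈ PK(n) : S_i(p) = k} = C_{n,k} for all n ≥ 0 and k ≥ 0, and (ii) S_i(p) = S_i(P_{i+1}) + c_i for every n ≥ 1 and every p ∈ PK(n) with first-return decomposition (P_1, …, P_{m+1}). Then for every n ≥ 1, Σ_{p ∈ PK(n)} ∏_{i=0}^{m} q_i^{S_i(p)} = (∏_{i=0}^{m} q_i^{c_i}) · Σ_{k=0}^{n−1} C_{n−1,k} · h_k(q_0, …, q_m) in ℤ[q_0,…,q_m]; in particular this joint generating polynomial is a nonnegative-integer linear combination of complete homogeneous symmetric polynomials times a monomial. -/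

import Mathlib

open scoped Classical
open Finset

noncomputable section

/-- The set of positive nondecreasing sequences of length `n` bounded above by `b` is finite. -/
lemma boundedSeq_finite (n : ℕ) (b : ℕ → ℕ) :
    {p : Fin n → ℕ | Monotone p ∧ ∀ i : Fin n, 1 ≤ p i ∧ p i ≤ b i}.Finite := by
  have h : {p : Fin n → ℕ | Monotone p ∧ ∀ i : Fin n, 1 ≤ p i ∧ p i ≤ b i} ⊆
      Set.pi Set.univ (fun i : Fin n => Set.Iic (b i)) := by
    intro p hp
    rw [Set.mem_pi]
    intro i _
    exact (hp.2 i).2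
  exact (Set.Finite.pi fun i : Fin n => Set.finite_Iic (b (i : ℕ))).subset h

/-- The finset of nondecreasing sequences `p : Fin n → ℕ` of positive integers
with `p i ≤ b i` for all `i`. -/
def BSeq (n : ℕ) (b : ℕ → ℕ) : Finset (Fin n → ℕ) := (boundedSeq_finite n b).toFinset

/-- `PK m n` : the u-parking distributions of length `n`, i.e. nondecreasing sequences
of positive integers with `p i ≤ m*(i-1)+1` (here indexed from `0`, so `p i ≤ m*i+1`). -/
def PK (m n : ℕ) : Finset (Fin n → ℕ) := BSeq n (fun i => m * i + 1)

/-- `luck p` : the number of indices `i` with `p i = m*(i-1)+1` (0-indexed: `m*i+1`). -/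
def luck (m : ℕ) {n : ℕ} (p : Fin n → ℕ) : ℕ :=
  (Finset.univ.filter (fun i : Fin n => p i = m * (i : ℕ) + 1)).card

/-- `freq j p` = `ω_j(p)` : the number of indices `i` with `p i = j`. -/
def freq (j : ℕ) {n : ℕ} (p : Fin n → ℕ) : ℕ :=
  (Finset.univ.filter (fun i : Fin n => p i = j)).card

/-- `hcnt m n k r` = `h_{n,k,r}` : the number of nondecreasing sequences of positive
integers with `p_i ≤ m*(i+k-1) - r` for `1 ≤ i ≤ n` (0-indexed: `p i ≤ m*(i+k) - r`). -/
def hcnt (m n k r : ℕ) : ℕ := (BSeq n (fun i => m * (i + k) - r)).card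

/-- `Cnt m n k` = `C_{n,k}` : the number of `p ∈ PK m n` with `luck p = k`. -/
def Cnt (m n k : ℕ) : ℕ := ((PK m n).filter (fun p => luck m p = k)).card

/-- `Rpoly m n` = `R_n(q) = Σ_k C_{n,k} q^k ∈ ℤ[q]`. -/
def Rpoly (m n : ℕ) : Polynomial ℤ :=
  ∑ k ∈ Finset.range (n + 1), (Cnt m n k : Polynomial ℤ) * Polynomial.X ^ k

/-- `hfull t k` : the complete homogeneous symmetric polynomial of degree `k`
in variables `q_0, …, q_{t-1}`, i.e. the sum of all monomials of total degree `k`. -/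
def hfull (t k : ℕ) : MvPolynomial (Fin t) ℤ :=
  ∑ α ∈ Finset.Nat.antidiagonalTuple t k, ∏ i : Fin t, MvPolynomial.X i ^ α i

/-- `ffix m p ℓ` = `i_ℓ(p)` : the first fixed point of type `ℓ`, the smallest `k` with
`2 ≤ k ≤ n` and `p_k ≥ m*(k-2)+1+ℓ` (1-indexed), or `n+1` if there is none. -/
def ffix (m : ℕ) {n : ℕ} (p : Fin n → ℕ) (ℓ : ℕ) : ℕ :=
  sInf ({k | 2 ≤ k ∧ ∃ i : Fin n, (i : ℕ) + 1 = k ∧ m * (k - 2) + 1 + ℓ ≤ p i} ∪ {n + 1})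

/-- The extended first fixed points: `i_0 = 2`, `i_{m+1} = n+1`, and `i_ℓ = ffix m p ℓ`
for `1 ≤ ℓ ≤ m`. -/
def ffixE (m : ℕ) {n : ℕ} (p : Fin n → ℕ) (j : ℕ) : ℕ :=
  if j = 0 then 2 else if j = m + 1 then n + 1 else ffix m p j

/-- `pget p k` = `p_k` (1-indexed), `0` out of range. -/
def pget {n : ℕ} (p : Fin n → ℕ) (k : ℕ) : ℕ := if h : k - 1 < n then p ⟨k - 1, h⟩ else 0

/-- The `(ℓ+1)`-st part `P_{ℓ+1}` (for `0 ≤ ℓ ≤ m`) of the first-return decomposition of `p`: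
the list `(p_k - (p_{i_ℓ} - 1))` for `i_ℓ ≤ k ≤ i_{ℓ+1} - 1`. -/
def FRD (m : ℕ) {n : ℕ} (p : Fin n → ℕ) (ℓ : ℕ) : List ℕ :=
  (List.range (ffixE m p (ℓ + 1) - ffixE m p ℓ)).map
    (fun t => pget p (ffixE m p ℓ + t) - (pget p (ffixE m p ℓ) - 1))

/-- A list is a u-parking distribution: nondecreasing, with `l.get i ∈ [1, m*i+1]`
(0-indexed). -/
def isPKlist (m : ℕ) (l : List ℕ) : Prop :=
  l.Pairwise (· ≤ ·) ∧ ∀ i : Fin l.length, 1 ≤ l.get i ∧ l.get i ≤ m * (i : ℕ) + 1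

/-- `θ(p)` : the nondecreasing rearrangement of the concatenation of `p` with the list of
all `j ∈ {1, …, m*n-m+1}` with `j ≢ 1 (mod m)`. -/
def theta (m n : ℕ) (p : Fin n → ℕ) : List ℕ :=
  Multiset.sort
    ((List.ofFn p : Multiset ℕ) +
      (((List.range (m * n - m + 1)).map (· + 1)).filter
        (fun j => ¬ j ≡ 1 [MOD m]) : List ℕ)) (· ≤ ·)

/-- Parking distributions on the `m`-caterpillar of length `n`, as nondecreasing lists. -/
def PKcat (m n : ℕ) : Set (List ℕ) :=
  {a | a.length = m * n - m + 1 ∧ a.Pairwise (· ≤ ·) ∧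
       (∀ x ∈ a, 1 ≤ x ∧ x ≤ m * n - m + 1) ∧
       (∀ i : ℕ, 1 ≤ i → i ≤ n →
         m * (i - 1) + 1 ≤ (a.filter (fun x => x ≤ m * (i - 1) + 1)).length) ∧
       (∀ j : ℕ, 1 ≤ j → j ≤ m * n - m + 1 → ¬ j ≡ 1 [MOD m] → j ∈ a)}

-- ========================= auxiliary development =========================

section Aux

lemma mem_PK {m n : ℕ} {p : Fin n → ℕ} :
    p ∈ PK m n ↔ Monotone p ∧ ∀ i : Fin n, 1 ≤ p i ∧ p i ≤ m * i + 1 := by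
  simp [PK, BSeq, Set.Finite.mem_toFinset]

lemma PK_zero (m : ℕ) : PK m 0 = {fun i => i.elim0} := by
  ext p
  simp only [mem_PK, Finset.mem_singleton]
  constructor
  · intro _; funext i; exact i.elim0
  · rintro rfl; exact ⟨fun a b _ => a.elim0, fun i => i.elim0⟩

lemma luck_fin0 (m : ℕ) : luck m (fun i : Fin 0 => i.elim0) = 0 := by
  simp [luck]

lemma Cnt_zero_left (m k : ℕ) : Cnt m 0 k = if k = 0 then 1 else 0 := by
  rw [Cnt, PK_zero, Finset.filter_singleton, luck_fin0]
  split_ifs with h1 h2 h2 <;> simp_all <;> omega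

lemma PK_one (m : ℕ) : PK m 1 = {fun _ => 1} := by
  ext p
  simp only [mem_PK, Finset.mem_singleton]
  constructor
  · rintro ⟨-, h⟩
    funext i
    have hi := h i
    have : (i : ℕ) = 0 := by omega
    rw [this] at hi
    omega
  · rintro rfl
    exact ⟨monotone_const, fun i => ⟨le_refl _, Nat.le_add_left _ _⟩⟩

lemma luck_fin1 (m : ℕ) : luck m (fun _ : Fin 1 => 1) = 1 := by
  rw [luck]
  rw [show (Finset.univ : Finset (Fin 1)) = {0} from rfl]
  rw [Finset.filter_singleton]
  norm_num

lemma Cnt_one_left (m k : ℕ) : Cnt m 1 k = if k = 1 then 1 else 0 := by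
  rw [Cnt, PK_one, Finset.filter_singleton, luck_fin1]
  split_ifs with h1 h2 h2 <;> simp_all <;> omega

lemma Cnt_eq_zero_of_gt {m n k : ℕ} (h : n < k) : Cnt m n k = 0 := by
  rw [Cnt, Finset.card_eq_zero, Finset.filter_eq_empty_iff]
  intro p _
  have : luck m p ≤ n := by
    have := Finset.card_filter_le (Finset.univ : Finset (Fin n))
      (fun i : Fin n => p i = m * (i : ℕ) + 1)
    simpa [luck] using this
  omega

-- ================== ffix structure ==================

lemma ffix_le (m : ℕ) {n : ℕ} (p : Fin n → ℕ) (ℓ : ℕ) : ffix m p ℓ ≤ n + 1 :=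
  Nat.sInf_le (Set.mem_union_right _ rfl)

lemma ffix_spec (m : ℕ) {n : ℕ} (p : Fin n → ℕ) (ℓ : ℕ) :
    ffix m p ℓ = n + 1 ∨
      (2 ≤ ffix m p ℓ ∧ ∃ i : Fin n, (i : ℕ) + 1 = ffix m p ℓ ∧
        m * (ffix m p ℓ - 2) + 1 + ℓ ≤ p i) := by
  have h := Nat.sInf_mem
    (s := {k | 2 ≤ k ∧ ∃ i : Fin n, (i : ℕ) + 1 = k ∧ m * (k - 2) + 1 + ℓ ≤ p i} ∪ {n + 1})
    ⟨n + 1, Set.mem_union_right _ rfl⟩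
  rcases h with ⟨h2, hex⟩ | h
  · exact Or.inr ⟨h2, hex⟩
  · exact Or.inl h

lemma two_le_ffix (m : ℕ) {n : ℕ} (hn : 1 ≤ n) (p : Fin n → ℕ) (ℓ : ℕ) :
    2 ≤ ffix m p ℓ := by
  rcases ffix_spec m p ℓ with h | ⟨h2, -⟩
  · omega
  · exact h2

lemma lt_ffix_bound {m n : ℕ} {p : Fin n → ℕ} {ℓ k : ℕ} (hk : k < ffix m p ℓ)
    (h2 : 2 ≤ k) (i : Fin n) (hik : (i : ℕ) + 1 = k) :
    p i ≤ m * (k - 2) + ℓ := by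
  have h := Nat.notMem_of_lt_sInf (show k < ffix m p ℓ from hk)
  rw [Set.mem_union] at h
  push_neg at h
  have h1 := h.1
  simp only [Set.mem_setOf_eq, not_and, not_exists] at h1
  have := h1 h2 i hik
  omega

lemma ffix_mono (m : ℕ) {n : ℕ} (p : Fin n → ℕ) {ℓ ℓ' : ℕ} (h : ℓ ≤ ℓ') :
    ffix m p ℓ ≤ ffix m p ℓ' := by
  rcases ffix_spec m p ℓ' with heq | ⟨h2, i, hik, hpi⟩
  · rw [heq]; exact ffix_le m p ℓ
  · exact Nat.sInf_le (Set.mem_union_left _ ⟨h2, i, hik, by omega⟩)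

lemma ffixE_zero (m : ℕ) {n : ℕ} (p : Fin n → ℕ) : ffixE m p 0 = 2 := rfl

lemma ffixE_last (m : ℕ) {n : ℕ} (p : Fin n → ℕ) : ffixE m p (m + 1) = n + 1 := by
  rw [ffixE, if_neg (by omega), if_pos rfl]

lemma ffixE_mid (m : ℕ) {n : ℕ} (p : Fin n → ℕ) {j : ℕ} (h1 : 1 ≤ j) (h2 : j ≤ m) :
    ffixE m p j = ffix m p j := by
  rw [ffixE, if_neg (by omega), if_neg (by omega)]

lemma two_le_ffixE (m : ℕ) {n : ℕ} (hn : 1 ≤ n) (p : Fin n → ℕ) (j : ℕ) :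
    2 ≤ ffixE m p j := by
  rw [ffixE]
  split_ifs
  · omega
  · omega
  · exact two_le_ffix m hn p j

lemma ffixE_le (m : ℕ) {n : ℕ} (hn : 1 ≤ n) (p : Fin n → ℕ) (j : ℕ) :
    ffixE m p j ≤ n + 1 := by
  rw [ffixE]
  split_ifs
  · omega
  · omega
  · exact ffix_le m p j

lemma ffixE_mono (m : ℕ) {n : ℕ} (hm : 1 ≤ m) (hn : 1 ≤ n) (p : Fin n → ℕ)
    {j : ℕ} (hj : j ≤ m) : ffixE m p j ≤ ffixE m p (j + 1) := by
  rcases Nat.eq_or_lt_of_le hj with heq | hlt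
  · rw [heq, ffixE_last]; exact ffixE_le m hn p m
  · have h1 : ffixE m p (j+1) = ffix m p (j+1) := ffixE_mid m p (by omega) (by omega)
    rcases Nat.eq_zero_or_pos j with rfl | hj0
    · rw [ffixE_zero, h1]; exact two_le_ffix m hn p 1
    · rw [ffixE_mid m p hj0 hj, h1]; exact ffix_mono m p (by omega)

end Aux


section Parts

variable {m n : ℕ} {p : Fin n → ℕ}

/-- value at the left end of a nonempty block -/
lemma pget_block_start (hm : 1 ≤ m) (hp : p ∈ PK m n) (hn : 1 ≤ n) {ℓ : ℕ} (hℓ : ℓ ≤ m)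
    (hlt : ffixE m p ℓ < ffixE m p (ℓ + 1)) :
    ffixE m p ℓ ≤ n ∧ pget p (ffixE m p ℓ) = m * (ffixE m p ℓ - 2) + ℓ + 1 := by
  obtain ⟨hmono, hbd⟩ := mem_PK.mp hp
  have h2k : 2 ≤ ffixE m p ℓ := two_le_ffixE m hn p ℓ
  have hkn : ffixE m p ℓ ≤ n := by
    have := ffixE_le m hn p (ℓ + 1)
    omega
  have hidx : ffixE m p ℓ - 1 < n := by omega
  have hpget : pget p (ffixE m p ℓ) = p ⟨ffixE m p ℓ - 1, hidx⟩ := by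
    rw [pget, dif_pos hidx]
  refine ⟨hkn, ?_⟩
  -- upper bound
  have hub : p ⟨ffixE m p ℓ - 1, hidx⟩ ≤ m * (ffixE m p ℓ - 2) + ℓ + 1 := by
    rcases Nat.lt_or_ge ℓ m with hltm | hgem
    · have he : ffixE m p (ℓ + 1) = ffix m p (ℓ + 1) := ffixE_mid m p (by omega) (by omega)
      have := lt_ffix_bound (ℓ := ℓ + 1) (k := ffixE m p ℓ) (by rw [← he]; exact hlt) h2k
        ⟨ffixE m p ℓ - 1, hidx⟩ (by simp; omega)
      omega
    · have hbd2 := (hbd ⟨ffixE m p ℓ - 1, hidx⟩).2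
      have hco : ((⟨ffixE m p ℓ - 1, hidx⟩ : Fin n) : ℕ) = ffixE m p ℓ - 1 := rfl
      rw [hco] at hbd2
      have hrw : m * (ffixE m p ℓ - 1) = m * (ffixE m p ℓ - 2) + m := by
        rw [show ffixE m p ℓ - 1 = (ffixE m p ℓ - 2) + 1 by omega, Nat.mul_succ]
      omega
  -- lower bound
  have hlb : m * (ffixE m p ℓ - 2) + 1 + ℓ ≤ p ⟨ffixE m p ℓ - 1, hidx⟩ := by
    rcases Nat.eq_zero_or_pos ℓ with rfl | hℓ1
    · have h1 := (hbd ⟨ffixE m p 0 - 1, hidx⟩).1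
      have hk2 : ffixE m p 0 = 2 := ffixE_zero m p
      have h0 : m * (ffixE m p 0 - 2) = 0 := by simp [hk2]
      omega
    · have he : ffixE m p ℓ = ffix m p ℓ := ffixE_mid m p hℓ1 hℓ
      rcases ffix_spec m p ℓ with heq | ⟨-, i, hik, hpi⟩
      · omega
      · have hieq : i = ⟨ffixE m p ℓ - 1, hidx⟩ := by
          apply Fin.ext
          show (i : ℕ) = ffixE m p ℓ - 1
          omega
        rw [← he] at hpi
        rw [hieq] at hpi
        exact hpi
  omega

/-- the entries of a block, as a function -/
def partFn (m : ℕ) {n : ℕ} (p : Fin n → ℕ) (ℓ : ℕ) :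
    Fin (ffixE m p (ℓ + 1) - ffixE m p ℓ) → ℕ :=
  fun t => pget p (ffixE m p ℓ + (t : ℕ)) - (pget p (ffixE m p ℓ) - 1)

lemma FRD_eq_ofFn (m : ℕ) {n : ℕ} (p : Fin n → ℕ) (ℓ : ℕ) :
    FRD m p ℓ = List.ofFn (partFn m p ℓ) := by
  apply List.ext_getElem
  · simp [FRD]
  · intro i h1 h2
    simp [FRD, partFn]

lemma FRD_length (m : ℕ) {n : ℕ} (p : Fin n → ℕ) (ℓ : ℕ) :
    (FRD m p ℓ).length = ffixE m p (ℓ + 1) - ffixE m p ℓ := by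
  simp [FRD]

lemma partFn_mem_PK (hm : 1 ≤ m) (hp : p ∈ PK m n) (hn : 1 ≤ n) {ℓ : ℕ} (hℓ : ℓ ≤ m) :
    partFn m p ℓ ∈ PK m (ffixE m p (ℓ + 1) - ffixE m p ℓ) := by
  obtain ⟨hmono, hbd⟩ := mem_PK.mp hp
  rw [mem_PK]
  by_cases hempty : ffixE m p (ℓ + 1) - ffixE m p ℓ = 0
  · constructor
    · intro a b _
      exact absurd a.2 (by omega)
    · intro i; exact absurd i.2 (by omega)
  have hlt : ffixE m p ℓ < ffixE m p (ℓ + 1) := by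
    have := ffixE_mono m hm hn p hℓ
    omega
  obtain ⟨hkn, hstart⟩ := pget_block_start hm hp hn hℓ hlt
  have h2k : 2 ≤ ffixE m p ℓ := two_le_ffixE m hn p ℓ
  have hk'n : ffixE m p (ℓ + 1) ≤ n + 1 := ffixE_le m hn p (ℓ + 1)
  have hvalid : ∀ t : ℕ, t < ffixE m p (ℓ + 1) - ffixE m p ℓ → ffixE m p ℓ + t - 1 < n := by
    intro t ht; omega
  have hpgett : ∀ (t : ℕ) (ht : t < ffixE m p (ℓ + 1) - ffixE m p ℓ),
      pget p (ffixE m p ℓ + t) = p ⟨ffixE m p ℓ + t - 1, hvalid t ht⟩ := by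
    intro t ht; rw [pget, dif_pos (hvalid t ht)]
  -- upper bound for positions in the block
  have hub : ∀ (t : ℕ) (ht : t < ffixE m p (ℓ + 1) - ffixE m p ℓ),
      p ⟨ffixE m p ℓ + t - 1, hvalid t ht⟩ ≤ m * (ffixE m p ℓ - 2) + m * t + ℓ + 1 := by
    intro t ht
    have hsplit : m * (ffixE m p ℓ + t - 2) = m * (ffixE m p ℓ - 2) + m * t := by
      rw [show ffixE m p ℓ + t - 2 = (ffixE m p ℓ - 2) + t by omega, Nat.mul_add]
    rcases Nat.lt_or_ge ℓ m with hltm | hgem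
    · have he : ffixE m p (ℓ + 1) = ffix m p (ℓ + 1) := ffixE_mid m p (by omega) (by omega)
      have hb := lt_ffix_bound (ℓ := ℓ + 1) (k := ffixE m p ℓ + t)
        (by rw [← he]; omega) (by omega)
        ⟨ffixE m p ℓ + t - 1, hvalid t ht⟩ (by simp; omega)
      omega
    · have hbd2 := (hbd ⟨ffixE m p ℓ + t - 1, hvalid t ht⟩).2
      have hco : ((⟨ffixE m p ℓ + t - 1, hvalid t ht⟩ : Fin n) : ℕ) = ffixE m p ℓ + t - 1 := rfl
      rw [hco] at hbd2
      have hrw : m * (ffixE m p ℓ + t - 1) = m * (ffixE m p ℓ - 2) + m * t + m := by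
        rw [show ffixE m p ℓ + t - 1 = ((ffixE m p ℓ - 2) + t) + 1 by omega, Nat.mul_succ,
          Nat.mul_add]
      omega
  have hidx0 : ffixE m p ℓ - 1 < n := by omega
  have hlbmono : ∀ (t : ℕ) (ht : t < ffixE m p (ℓ + 1) - ffixE m p ℓ),
      p ⟨ffixE m p ℓ - 1, hidx0⟩ ≤ p ⟨ffixE m p ℓ + t - 1, hvalid t ht⟩ := by
    intro t ht
    apply hmono
    show ffixE m p ℓ - 1 ≤ ffixE m p ℓ + t - 1
    omega
  have hstart' : p ⟨ffixE m p ℓ - 1, hidx0⟩ = m * (ffixE m p ℓ - 2) + ℓ + 1 := by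
    have hh : pget p (ffixE m p ℓ) = p ⟨ffixE m p ℓ - 1, hidx0⟩ := by
      rw [pget, dif_pos hidx0]
    omega
  constructor
  · -- monotone
    intro a b hab
    show pget p (ffixE m p ℓ + (a : ℕ)) - (pget p (ffixE m p ℓ) - 1) ≤
      pget p (ffixE m p ℓ + (b : ℕ)) - (pget p (ffixE m p ℓ) - 1)
    rw [hpgett (a : ℕ) a.2, hpgett (b : ℕ) b.2]
    have hmm : p ⟨ffixE m p ℓ + (a : ℕ) - 1, hvalid (a : ℕ) a.2⟩ ≤
        p ⟨ffixE m p ℓ + (b : ℕ) - 1, hvalid (b : ℕ) b.2⟩ := by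
      apply hmono
      show ffixE m p ℓ + (a : ℕ) - 1 ≤ ffixE m p ℓ + (b : ℕ) - 1
      have : (a : ℕ) ≤ (b : ℕ) := hab
      omega
    omega
  · intro t
    constructor
    · show 1 ≤ pget p (ffixE m p ℓ + (t : ℕ)) - (pget p (ffixE m p ℓ) - 1)
      rw [hpgett (t : ℕ) t.2]
      have h1 := hlbmono (t : ℕ) t.2
      omega
    · show pget p (ffixE m p ℓ + (t : ℕ)) - (pget p (ffixE m p ℓ) - 1) ≤ m * (t : ℕ) + 1
      rw [hpgett (t : ℕ) t.2]
      have h2 := hub (t : ℕ) t.2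
      omega

lemma sum_FRD_length (hm : 1 ≤ m) (hp : p ∈ PK m n) (hn : 1 ≤ n) :
    ∑ i : Fin (m + 1), (FRD m p (i : ℕ)).length = n - 1 := by
  have key : ∀ t : ℕ, t ≤ m + 1 →
      ∑ j ∈ Finset.range t, (ffixE m p (j + 1) - ffixE m p j) = ffixE m p t - 2 := by
    intro t ht
    induction t with
    | zero => simp [ffixE_zero]
    | succ t ih =>
      rw [Finset.sum_range_succ, ih (by omega)]
      have h1 : ffixE m p t ≤ ffixE m p (t + 1) := ffixE_mono m hm hn p (by omega)
      have h2 : 2 ≤ ffixE m p t := two_le_ffixE m hn p t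
      omega
  calc ∑ i : Fin (m + 1), (FRD m p (i : ℕ)).length
      = ∑ j ∈ Finset.range (m + 1), (ffixE m p (j + 1) - ffixE m p j) := by
        rw [← Fin.sum_univ_eq_sum_range (fun j => ffixE m p (j + 1) - ffixE m p j) (m + 1)]
        exact Finset.sum_congr rfl (fun i _ => FRD_length m p i)
    _ = n - 1 := by rw [key (m + 1) le_rfl, ffixE_last]; omega

end Parts


-- ================== gluing: the inverse of the first-return decomposition ==================

section Glue

variable {m n : ℕ}

/-- the finset of parking-distribution lists of length `< n` -/
def PKL (m n : ℕ) : Finset (List ℕ) :=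
  (Finset.range n).biUnion (fun s => (PK m s).image List.ofFn)

def lenE {m : ℕ} (l : Fin (m + 1) → List ℕ) (j : ℕ) : ℕ :=
  if h : j < m + 1 then (l ⟨j, h⟩).length else 0

def psum {m : ℕ} (l : Fin (m + 1) → List ℕ) (t : ℕ) : ℕ :=
  ∑ j ∈ Finset.range t, lenE l j

def partE {m : ℕ} (l : Fin (m + 1) → List ℕ) (ℓ t : ℕ) : ℕ :=
  if h : ℓ < m + 1 then (l ⟨ℓ, h⟩).getD t 0 else 0

def Bidx {m : ℕ} (l : Fin (m + 1) → List ℕ) (x : ℕ) : ℕ :=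
  sInf {ℓ : ℕ | x < psum l (ℓ + 1)}

def glue (m n : ℕ) (l : Fin (m + 1) → List ℕ) : Fin n → ℕ :=
  fun j => if (j : ℕ) = 0 then 1 else
    partE l (Bidx l ((j : ℕ) - 1)) ((j : ℕ) - 1 - psum l (Bidx l ((j : ℕ) - 1)))
      + m * psum l (Bidx l ((j : ℕ) - 1)) + Bidx l ((j : ℕ) - 1)

lemma mem_PKL {a : List ℕ} :
    a ∈ PKL m n ↔ ∃ s, s < n ∧ ∃ q : Fin s → ℕ, q ∈ PK m s ∧ a = List.ofFn q := by
  simp only [PKL, Finset.mem_biUnion, Finset.mem_range, Finset.mem_image]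
  constructor
  · rintro ⟨s, hs, q, hq, rfl⟩; exact ⟨s, hs, q, hq, rfl⟩
  · rintro ⟨s, hs, q, hq, rfl⟩; exact ⟨s, hs, q, hq, rfl⟩

lemma PKL_spec {a : List ℕ} (h : a ∈ PKL m n) :
    a.length < n ∧
    (∀ t, t < a.length → 1 ≤ a.getD t 0 ∧ a.getD t 0 ≤ m * t + 1) ∧
    (∀ t t', t ≤ t' → t' < a.length → a.getD t 0 ≤ a.getD t' 0) := by
  obtain ⟨s, hs, q, hq, rfl⟩ := mem_PKL.mp h
  obtain ⟨hmono, hbd⟩ := mem_PK.mp hq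
  have hlen : (List.ofFn q).length = s := List.length_ofFn (f := q)
  have hget : ∀ t, (ht : t < s) → (List.ofFn q).getD t 0 = q ⟨t, ht⟩ := by
    intro t ht
    rw [List.getD_eq_getElem _ _ (by rw [hlen]; exact ht), List.getElem_ofFn]
  refine ⟨by omega, ?_, ?_⟩
  · intro t ht
    rw [hlen] at ht
    rw [hget t ht]
    exact hbd ⟨t, ht⟩
  · intro t t' htt ht'
    rw [hlen] at ht'
    rw [hget t (by omega), hget t' ht']
    exact hmono (by show t ≤ t'; omega)

lemma psum_mono (l : Fin (m + 1) → List ℕ) {t t' : ℕ} (h : t ≤ t') :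
    psum l t ≤ psum l t' :=
  Finset.sum_le_sum_of_subset (Finset.range_subset_range.mpr h)

lemma psum_succ (l : Fin (m + 1) → List ℕ) (t : ℕ) :
    psum l (t + 1) = psum l t + lenE l t :=
  Finset.sum_range_succ _ t

lemma lenE_eq (l : Fin (m + 1) → List ℕ) (i : Fin (m + 1)) : lenE l (i : ℕ) = (l i).length := by
  rw [lenE, dif_pos i.isLt]

lemma psum_last (l : Fin (m + 1) → List ℕ) (hsum : ∑ i : Fin (m + 1), (l i).length = n - 1) :
    psum l (m + 1) = n - 1 := by
  rw [psum, ← Fin.sum_univ_eq_sum_range (fun j => lenE l j) (m + 1), ← hsum]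
  exact Finset.sum_congr rfl (fun i _ => lenE_eq l i)

section withl

variable {l : Fin (m + 1) → List ℕ}
  (hsum : ∑ i : Fin (m + 1), (l i).length = n - 1)

include hsum

lemma Bidx_lt {x : ℕ} (hx : x < n - 1) : x < psum l (Bidx l x + 1) := by
  have hmem : m ∈ {ℓ : ℕ | x < psum l (ℓ + 1)} := by
    show x < psum l (m + 1)
    rw [psum_last l hsum]; exact hx
  exact Nat.sInf_mem ⟨m, hmem⟩

lemma Bidx_le {x : ℕ} (hx : x < n - 1) : Bidx l x ≤ m := by
  apply Nat.sInf_le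
  show x < psum l (m + 1)
  rw [psum_last l hsum]; exact hx

lemma Bidx_ge {x : ℕ} (hx : x < n - 1) : psum l (Bidx l x) ≤ x := by
  rcases Nat.eq_zero_or_pos (Bidx l x) with h0 | hpos
  · rw [h0]; simp [psum]
  · have hnm := Nat.notMem_of_lt_sInf (show Bidx l x - 1 < Bidx l x by omega)
    simp only [Set.mem_setOf_eq, not_lt] at hnm
    calc psum l (Bidx l x) = psum l (Bidx l x - 1 + 1) := by congr 1; omega
      _ ≤ x := hnm

omit hsum in
lemma Bidx_eq {x ℓ : ℕ} (h1 : psum l ℓ ≤ x) (h2 : x < psum l (ℓ + 1)) : Bidx l x = ℓ := by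
  have hle : Bidx l x ≤ ℓ := Nat.sInf_le (show ℓ ∈ {ℓ' : ℕ | x < psum l (ℓ' + 1)} from h2)
  have hne : {ℓ' : ℕ | x < psum l (ℓ' + 1)}.Nonempty := ⟨ℓ, h2⟩
  have hmem : x < psum l (Bidx l x + 1) := Nat.sInf_mem hne
  by_contra hc
  have hlt : Bidx l x + 1 ≤ ℓ := by omega
  have : psum l (Bidx l x + 1) ≤ psum l ℓ := psum_mono l hlt
  omega

variable (hl : ∀ i, l i ∈ PKL m n)
include hl

/-- bounds on the entry used to form `glue` at offset `x` -/
lemma glue_entry_bounds {x : ℕ} (hx : x < n - 1) :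
    Bidx l x ≤ m ∧ psum l (Bidx l x) ≤ x ∧ x - psum l (Bidx l x) < lenE l (Bidx l x) ∧
    1 ≤ partE l (Bidx l x) (x - psum l (Bidx l x)) ∧
    partE l (Bidx l x) (x - psum l (Bidx l x)) ≤ m * (x - psum l (Bidx l x)) + 1 := by
  have hBle := Bidx_le hsum hx
  have hBge := Bidx_ge hsum hx
  have hBlt := Bidx_lt hsum hx
  rw [psum_succ] at hBlt
  have htlt : x - psum l (Bidx l x) < lenE l (Bidx l x) := by omega
  have hBm1 : Bidx l x < m + 1 := by omega
  have hle : lenE l (Bidx l x) = (l ⟨Bidx l x, hBm1⟩).length := dif_pos hBm1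
  have hpe : partE l (Bidx l x) (x - psum l (Bidx l x)) =
      (l ⟨Bidx l x, hBm1⟩).getD (x - psum l (Bidx l x)) 0 := dif_pos hBm1
  obtain ⟨-, hbd, -⟩ := PKL_spec (hl ⟨Bidx l x, hBm1⟩)
  have := hbd (x - psum l (Bidx l x)) (by omega)
  refine ⟨hBle, hBge, htlt, ?_, ?_⟩ <;> rw [hpe] <;> omega

lemma glue_mem_PK (hm : 1 ≤ m) (hn : 1 ≤ n) : glue m n l ∈ PK m n := by
  rw [mem_PK]
  have hval : ∀ j : Fin n, (j : ℕ) ≠ 0 → glue m n l j =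
      partE l (Bidx l ((j : ℕ) - 1)) ((j : ℕ) - 1 - psum l (Bidx l ((j : ℕ) - 1)))
        + m * psum l (Bidx l ((j : ℕ) - 1)) + Bidx l ((j : ℕ) - 1) := by
    intro j hj; rw [glue, if_neg hj]
  have hxlt : ∀ j : Fin n, (j : ℕ) ≠ 0 → (j : ℕ) - 1 < n - 1 := by
    intro j hj; have := j.isLt; omega
  constructor
  · -- monotone
    obtain ⟨n', rfl⟩ : ∃ n', n = n' + 1 := ⟨n - 1, by omega⟩
    rw [Fin.monotone_iff_le_succ]
    intro i
    have hsv : ((i.succ : Fin (n' + 1)) : ℕ) = (i : ℕ) + 1 := Fin.val_succ i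
    have hcv : ((i.castSucc : Fin (n' + 1)) : ℕ) = (i : ℕ) := Fin.coe_castSucc i
    have hsucc_ne : ((i.succ : Fin (n' + 1)) : ℕ) ≠ 0 := by rw [hsv]; omega
    by_cases h0 : (i : ℕ) = 0
    · have h1 : glue m (n' + 1) l i.castSucc = 1 := by
        rw [glue, if_pos (by rw [hcv, h0])]
      rw [h1, hval _ hsucc_ne]
      obtain ⟨-, -, -, h4, -⟩ := glue_entry_bounds hsum hl (hxlt _ hsucc_ne)
      omega
    · rw [hval _ (by rw [hcv]; exact h0), hval _ hsucc_ne, hsv, hcv]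
      set x := (i : ℕ) - 1 with hxdef
      have hilt : (i : ℕ) < n' := i.isLt
      have hx : x < n' + 1 - 1 := by omega
      have hx' : (i : ℕ) + 1 - 1 = x + 1 := by omega
      rw [hx']
      have hx1 : x + 1 < n' + 1 - 1 := by omega
      obtain ⟨hB1, hB2, hB3, hB4, hB5⟩ := glue_entry_bounds hsum hl hx
      obtain ⟨hC1, hC2, hC3, hC4, hC5⟩ := glue_entry_bounds hsum hl hx1
      have hps : psum l (Bidx l x + 1) = psum l (Bidx l x) + lenE l (Bidx l x) :=
        psum_succ l _
      rcases Nat.lt_or_ge (x + 1) (psum l (Bidx l x + 1)) with hsame | hnew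
      · -- same block
        have hBeq : Bidx l (x + 1) = Bidx l x := Bidx_eq (by omega) hsame
        rw [hBeq]
        have hBm1 : Bidx l x < m + 1 := by omega
        have hpe1 : partE l (Bidx l x) (x - psum l (Bidx l x)) =
            (l ⟨Bidx l x, hBm1⟩).getD (x - psum l (Bidx l x)) 0 := dif_pos hBm1
        have hpe2 : partE l (Bidx l x) (x + 1 - psum l (Bidx l x)) =
            (l ⟨Bidx l x, hBm1⟩).getD (x + 1 - psum l (Bidx l x)) 0 := dif_pos hBm1
        obtain ⟨-, -, hmono⟩ := PKL_spec (hl ⟨Bidx l x, hBm1⟩)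
        have hlen : lenE l (Bidx l x) = (l ⟨Bidx l x, hBm1⟩).length := dif_pos hBm1
        have := hmono (x - psum l (Bidx l x)) (x + 1 - psum l (Bidx l x)) (by omega)
          (by rw [hBeq] at hC3; omega)
        rw [hpe1, hpe2]
        omega
      · -- new block
        have hgt : Bidx l x < Bidx l (x + 1) := by
          by_contra hc
          push_neg at hc
          have h5 := Bidx_lt hsum hx1
          have : psum l (Bidx l (x + 1) + 1) ≤ psum l (Bidx l x + 1) := psum_mono l (by omega)
          omega
        have hmono2 : psum l (Bidx l x + 1) ≤ psum l (Bidx l (x + 1)) := psum_mono l (by omega)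
        have hfst : psum l (Bidx l (x + 1)) = x + 1 := by omega
        rw [hfst] at hC4 hC5 ⊢
        simp only [Nat.sub_self] at hC4 hC5 ⊢
        have hmul : m * (x - psum l (Bidx l x)) + m * psum l (Bidx l x) = m * x := by
          rw [← Nat.mul_add]; congr 1; omega
        have hBle2 : Bidx l x + 1 ≤ Bidx l (x + 1) := hgt
        have : m * x ≤ m * (x + 1) := Nat.mul_le_mul_left m (by omega)
        omega
  · -- bounds
    intro j
    by_cases h0 : (j : ℕ) = 0
    · rw [glue, if_pos h0]
      omega
    · rw [hval j h0]
      obtain ⟨hB1, hB2, hB3, hB4, hB5⟩ := glue_entry_bounds hsum hl (hxlt j h0)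
      have hmul : m * ((j : ℕ) - 1 - psum l (Bidx l ((j : ℕ) - 1)))
          + m * psum l (Bidx l ((j : ℕ) - 1)) = m * ((j : ℕ) - 1) := by
        rw [← Nat.mul_add]; congr 1; omega
      have hmul2 : m * ((j : ℕ) - 1) + m = m * (j : ℕ) := by
        rw [← Nat.mul_succ]; congr 1; omega
      omega


omit hsum hl in
lemma glue_val_of_block {x : ℕ} {ℓ0 : ℕ}
    (h1 : psum l ℓ0 ≤ x) (h2 : x < psum l (ℓ0 + 1)) (j : Fin n) (hj : (j : ℕ) = x + 1) :
    glue m n l j = partE l ℓ0 (x - psum l ℓ0) + m * psum l ℓ0 + ℓ0 := by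
  have hB : Bidx l x = ℓ0 := Bidx_eq h1 h2
  rw [glue, if_neg (by omega)]
  simp only [hj, Nat.add_sub_cancel, hB]

lemma ffix_glue (hm : 1 ≤ m) (hn : 1 ≤ n) {ℓ0 : ℕ} (hℓ1 : 1 ≤ ℓ0) (hℓ2 : ℓ0 ≤ m) :
    ffix m (glue m n l) ℓ0 = 2 + psum l ℓ0 := by
  have hσ : psum l ℓ0 ≤ n - 1 := by
    rw [← psum_last l hsum]; exact psum_mono l (by omega)
  -- no admissible position strictly below 2 + psum l ℓ0
  have claim1 : ∀ k, 2 ≤ k → k < 2 + psum l ℓ0 → ∀ i : Fin n, (i : ℕ) + 1 = k →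
      glue m n l i < m * (k - 2) + 1 + ℓ0 := by
    intro k h2k hk i hik
    have hival : (i : ℕ) = (k - 2) + 1 := by omega
    have hx : k - 2 < n - 1 := by omega
    have hBle : Bidx l (k - 2) + 1 ≤ ℓ0 := by
      have : Bidx l (k - 2) ≤ ℓ0 - 1 := Nat.sInf_le
        (show ℓ0 - 1 ∈ {ℓ' : ℕ | k - 2 < psum l (ℓ' + 1)} by
          show k - 2 < psum l (ℓ0 - 1 + 1)
          rw [show ℓ0 - 1 + 1 = ℓ0 by omega]
          omega)
      omega
    obtain ⟨hB1, hB2, hB3, hB4, hB5⟩ := glue_entry_bounds hsum hl hx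
    have hval : glue m n l i = partE l (Bidx l (k - 2)) (k - 2 - psum l (Bidx l (k - 2)))
        + m * psum l (Bidx l (k - 2)) + Bidx l (k - 2) :=
      glue_val_of_block hB2 (Bidx_lt hsum hx) i hival
    have hmul : m * (k - 2 - psum l (Bidx l (k - 2))) + m * psum l (Bidx l (k - 2))
        = m * (k - 2) := by
      rw [← Nat.mul_add]; congr 1; omega
    omega
  -- the position 2 + psum l ℓ0 is admissible (if within range)
  have claim2 : 2 + psum l ℓ0 ≤ n → ∀ i : Fin n, (i : ℕ) = psum l ℓ0 + 1 →
      m * psum l ℓ0 + 1 + ℓ0 ≤ glue m n l i := by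
    intro hle i hival
    have hx : psum l ℓ0 < n - 1 := by omega
    have hBge : ℓ0 ≤ Bidx l (psum l ℓ0) := by
      by_contra hc
      push_neg at hc
      have h5 := Bidx_lt hsum hx
      have : psum l (Bidx l (psum l ℓ0) + 1) ≤ psum l ℓ0 := psum_mono l (by omega)
      omega
    have hBeq : psum l (Bidx l (psum l ℓ0)) = psum l ℓ0 := by
      have h6 := Bidx_ge hsum hx
      have h7 : psum l ℓ0 ≤ psum l (Bidx l (psum l ℓ0)) := psum_mono l hBge
      omega
    obtain ⟨hB1, hB2, hB3, hB4, hB5⟩ := glue_entry_bounds hsum hl hx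
    have hval : glue m n l i = partE l (Bidx l (psum l ℓ0))
        (psum l ℓ0 - psum l (Bidx l (psum l ℓ0)))
        + m * psum l (Bidx l (psum l ℓ0)) + Bidx l (psum l ℓ0) :=
      glue_val_of_block hB2 (Bidx_lt hsum hx) i hival
    have hmm : m * psum l (Bidx l (psum l ℓ0)) = m * psum l ℓ0 := by rw [hBeq]
    omega
  apply le_antisymm
  · rcases Nat.lt_or_ge (2 + psum l ℓ0) (n + 1) with hlt | hge
    · apply Nat.sInf_le
      apply Set.mem_union_left
      refine ⟨by omega, ⟨psum l ℓ0 + 1, by omega⟩,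
        by show psum l ℓ0 + 1 + 1 = 2 + psum l ℓ0; omega, ?_⟩
      have := claim2 (by omega) ⟨psum l ℓ0 + 1, by omega⟩ rfl
      have hk2 : 2 + psum l ℓ0 - 2 = psum l ℓ0 := by omega
      rw [hk2]
      exact this
    · have heq : 2 + psum l ℓ0 = n + 1 := by omega
      rw [heq]
      exact ffix_le m (glue m n l) ℓ0
  · have hlb : ∀ b ∈ ({k | 2 ≤ k ∧ ∃ i : Fin n, (i : ℕ) + 1 = k ∧
        m * (k - 2) + 1 + ℓ0 ≤ glue m n l i} ∪ {n + 1} : Set ℕ), 2 + psum l ℓ0 ≤ b := by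
      rintro k (⟨h2k, i, hik, hbk⟩ | hk)
      · by_contra hc
        push_neg at hc
        have := claim1 k h2k hc i hik
        omega
      · simp only [Set.mem_singleton_iff] at hk
        omega
    exact le_csInf ⟨n + 1, Set.mem_union_right _ rfl⟩ hlb

omit hsum hl in
lemma psum_zero : psum l 0 = 0 := by simp [psum]

lemma ffixE_glue (hm : 1 ≤ m) (hn : 1 ≤ n) {ℓ0 : ℕ} (hℓ : ℓ0 ≤ m + 1) :
    ffixE m (glue m n l) ℓ0 = 2 + psum l ℓ0 := by
  rcases Nat.eq_zero_or_pos ℓ0 with rfl | h1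
  · rw [ffixE_zero, psum_zero]
  rcases Nat.eq_or_lt_of_le hℓ with heq | h2
  · rw [heq, ffixE_last, psum_last l hsum]; omega
  · rw [ffixE_mid _ _ h1 (by omega)]
    exact ffix_glue hsum hl hm hn h1 (by omega)

lemma FRD_glue (hm : 1 ≤ m) (hn : 1 ≤ n) (i : Fin (m + 1)) :
    FRD m (glue m n l) (i : ℕ) = l i := by
  have hE1 : ffixE m (glue m n l) (i : ℕ) = 2 + psum l (i : ℕ) :=
    ffixE_glue hsum hl hm hn (by omega)
  have hE2 : ffixE m (glue m n l) ((i : ℕ) + 1) = 2 + psum l ((i : ℕ) + 1) :=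
    ffixE_glue hsum hl hm hn (by have := i.isLt; omega)
  have hps : psum l ((i : ℕ) + 1) = psum l (i : ℕ) + lenE l (i : ℕ) := psum_succ l _
  have hlenE : lenE l (i : ℕ) = (l i).length := lenE_eq l i
  have hlen : (FRD m (glue m n l) (i : ℕ)).length = (l i).length := by
    rw [FRD_length, hE1, hE2]
    omega
  have hσla : psum l ((i : ℕ) + 1) ≤ n - 1 := by
    rw [← psum_last l hsum]
    exact psum_mono l (by have := i.isLt; omega)
  -- value of pget of the glue inside the block
  have hpg : ∀ t : ℕ, t < (l i).length →
      pget (glue m n l) (2 + psum l (i : ℕ) + t) = (l i).getD t 0 + m * psum l (i : ℕ) + (i : ℕ) := by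
    intro t ht
    have hx : psum l (i : ℕ) + t < n - 1 := by omega
    have hidx : 2 + psum l (i : ℕ) + t - 1 < n := by omega
    rw [pget, dif_pos hidx]
    have hval := glue_val_of_block (l := l) (x := psum l (i : ℕ) + t) (ℓ0 := (i : ℕ))
      (by omega) (by omega) ⟨2 + psum l (i : ℕ) + t - 1, hidx⟩ (by simp; omega)
    rw [hval]
    have hsub : psum l (i : ℕ) + t - psum l (i : ℕ) = t := by omega
    rw [hsub, partE, dif_pos i.isLt]
  apply List.ext_getElem hlen
  intro t h1 h2
  have hFRD : (FRD m (glue m n l) (i : ℕ))[t] =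
      pget (glue m n l) (ffixE m (glue m n l) (i : ℕ) + t)
        - (pget (glue m n l) (ffixE m (glue m n l) (i : ℕ)) - 1) := by
    simp [FRD]
  rw [hFRD, hE1]
  rw [hlen] at h1
  have hpg0 : pget (glue m n l) (2 + psum l (i : ℕ)) = (l i).getD 0 0 + m * psum l (i : ℕ) + (i : ℕ) := by
    have := hpg 0 (by omega)
    simpa using this
  rw [hpg t h1, hpg0]
  obtain ⟨-, hbd, -⟩ := PKL_spec (hl i)
  have hb0 := hbd 0 (by omega)
  have hbt := hbd t h1
  have hgetelem : (l i)[t] = (l i).getD t 0 := (List.getD_eq_getElem _ _ h1).symm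
  rw [hgetelem]
  omega

end withl


lemma FRD_mem_PKL {p : Fin n → ℕ} (hm : 1 ≤ m) (hp : p ∈ PK m n) (hn : 1 ≤ n) {ℓ : ℕ}
    (hℓ : ℓ ≤ m) : FRD m p ℓ ∈ PKL m n := by
  rw [mem_PKL]
  refine ⟨ffixE m p (ℓ + 1) - ffixE m p ℓ, ?_, partFn m p ℓ, partFn_mem_PK hm hp hn hℓ,
    FRD_eq_ofFn m p ℓ⟩
  have h1 := ffixE_le m hn p (ℓ + 1)
  have h2 := two_le_ffixE m hn p ℓ
  omega

lemma psum_FRD {p : Fin n → ℕ} (hm : 1 ≤ m) (hn : 1 ≤ n) {t : ℕ} (ht : t ≤ m + 1) :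
    psum (fun i : Fin (m + 1) => FRD m p (i : ℕ)) t = ffixE m p t - 2 := by
  induction t with
  | zero => rw [psum_zero, ffixE_zero]
  | succ t ih =>
    rw [psum_succ, ih (by omega)]
    have hlen : lenE (fun i : Fin (m + 1) => FRD m p (i : ℕ)) t
        = ffixE m p (t + 1) - ffixE m p t := by
      rw [lenE, dif_pos (show t < m + 1 by omega)]
      exact FRD_length m p t
    rw [hlen]
    have h1 : ffixE m p t ≤ ffixE m p (t + 1) := ffixE_mono m hm hn p (by omega)
    have h2 : 2 ≤ ffixE m p t := two_le_ffixE m hn p t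
    omega

lemma glue_FRD (hm : 1 ≤ m) (hn : 1 ≤ n) {p : Fin n → ℕ} (hp : p ∈ PK m n) :
    glue m n (fun i : Fin (m + 1) => FRD m p (i : ℕ)) = p := by
  set l := fun i : Fin (m + 1) => FRD m p (i : ℕ) with hldef
  have hsum : ∑ i : Fin (m + 1), (l i).length = n - 1 := sum_FRD_length hm hp hn
  have hψ : ∀ t, t ≤ m + 1 → psum l t = ffixE m p t - 2 := fun t ht => psum_FRD hm hn ht
  obtain ⟨hmono, hbd⟩ := mem_PK.mp hp
  funext j
  by_cases h0 : (j : ℕ) = 0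
  · rw [glue, if_pos h0]
    have hb := hbd j
    have : m * (j : ℕ) = 0 := by rw [h0, Nat.mul_zero]
    omega
  · set x := (j : ℕ) - 1 with hx
    have hxlt : x < n - 1 := by have := j.isLt; omega
    have hB1 : Bidx l x ≤ m := Bidx_le hsum hxlt
    have hB2 : psum l (Bidx l x) ≤ x := Bidx_ge hsum hxlt
    have hB3 : x < psum l (Bidx l x + 1) := Bidx_lt hsum hxlt
    have hval : glue m n l j = partE l (Bidx l x) (x - psum l (Bidx l x))
        + m * psum l (Bidx l x) + Bidx l x := glue_val_of_block hB2 hB3 j (by omega)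
    have hψB : psum l (Bidx l x) = ffixE m p (Bidx l x) - 2 := hψ _ (by omega)
    have hψB1 : psum l (Bidx l x + 1) = ffixE m p (Bidx l x + 1) - 2 := hψ _ (by omega)
    have h2B : 2 ≤ ffixE m p (Bidx l x) := two_le_ffixE m hn p _
    have h2B1 : 2 ≤ ffixE m p (Bidx l x + 1) := two_le_ffixE m hn p _
    have hlt : ffixE m p (Bidx l x) < ffixE m p (Bidx l x + 1) := by omega
    obtain ⟨hkn, hstart⟩ := pget_block_start hm hp hn hB1 hlt
    have hBm1 : Bidx l x < m + 1 := by omega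
    have ht0 : x - psum l (Bidx l x) < (FRD m p (Bidx l x)).length := by
      rw [FRD_length]; omega
    have hpe : partE l (Bidx l x) (x - psum l (Bidx l x)) =
        (FRD m p (Bidx l x)).getD (x - psum l (Bidx l x)) 0 := dif_pos hBm1
    rw [hval, hpe, List.getD_eq_getElem _ _ ht0]
    have hFRDel : (FRD m p (Bidx l x))[x - psum l (Bidx l x)]'ht0 =
        pget p (ffixE m p (Bidx l x) + (x - psum l (Bidx l x)))
          - (pget p (ffixE m p (Bidx l x)) - 1) := by simp [FRD]
    rw [hFRDel]
    have hidx : ffixE m p (Bidx l x) + (x - psum l (Bidx l x)) = x + 2 := by omega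
    rw [hidx]
    have hx2 : x + 2 - 1 < n := by have := j.isLt; omega
    have hpgx : pget p (x + 2) = p j := by
      rw [pget, dif_pos hx2]
      congr 1
      apply Fin.ext
      show x + 2 - 1 = (j : ℕ)
      omega
    rw [hpgx]
    have hmono2 : pget p (ffixE m p (Bidx l x)) ≤ p j := by
      rw [pget, dif_pos (show ffixE m p (Bidx l x) - 1 < n by omega)]
      apply hmono
      show ffixE m p (Bidx l x) - 1 ≤ (j : ℕ)
      omega
    have hmul : m * (ffixE m p (Bidx l x) - 2) = m * psum l (Bidx l x) := by rw [hψB]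
    omega

-- ================== the master summation lemma ==================

lemma master_sum {β : Type} [CommSemiring β] (m n : ℕ) (hm : 1 ≤ m) (hn : 1 ≤ n)
    (f : Fin (m + 1) → List ℕ → β) :
    ∑ p ∈ PK m n, ∏ i : Fin (m + 1), f i (FRD m p (i : ℕ)) =
    ∑ s ∈ Finset.Nat.antidiagonalTuple (m + 1) (n - 1),
      ∏ i : Fin (m + 1), ∑ q ∈ PK m (s i), f i (List.ofFn q) := by
  have step1 : ∑ p ∈ PK m n, ∏ i : Fin (m + 1), f i (FRD m p (i : ℕ)) =
      ∑ l ∈ (Fintype.piFinset (fun _ : Fin (m + 1) => PKL m n)).filter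
        (fun l => ∑ i, (l i).length = n - 1), ∏ i : Fin (m + 1), f i (l i) := by
    apply Finset.sum_nbij' (i := fun p (i : Fin (m + 1)) => FRD m p (i : ℕ))
      (j := fun l => glue m n l)
    · intro p hp
      rw [Finset.mem_filter, Fintype.mem_piFinset]
      exact ⟨fun i => FRD_mem_PKL hm hp hn (by have := i.isLt; omega),
        sum_FRD_length hm hp hn⟩
    · intro l hl
      rw [Finset.mem_filter, Fintype.mem_piFinset] at hl
      exact glue_mem_PK hl.2 (fun i => hl.1 i) hm hn
    · intro p hp
      exact glue_FRD hm hn hp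
    · intro l hl
      rw [Finset.mem_filter, Fintype.mem_piFinset] at hl
      funext i
      exact FRD_glue hl.2 (fun i => hl.1 i) hm hn i
    · intro p hp
      rfl
  rw [step1]
  have hTT : ((Fintype.piFinset (fun _ : Fin (m + 1) => PKL m n)).filter
      (fun l => ∑ i, (l i).length = n - 1)) =
      (Finset.Nat.antidiagonalTuple (m + 1) (n - 1)).biUnion
        (fun s => Fintype.piFinset (fun i => (PK m (s i)).image List.ofFn)) := by
    ext l
    simp only [Finset.mem_filter, Fintype.mem_piFinset, Finset.mem_biUnion,
      Finset.Nat.mem_antidiagonalTuple]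
    constructor
    · rintro ⟨h1, h2⟩
      refine ⟨fun i => (l i).length, h2, fun i => ?_⟩
      obtain ⟨s, hs, q, hq, hqe⟩ := mem_PKL.mp (h1 i)
      have hle : (l i).length = s := by rw [hqe, List.length_ofFn]
      show l i ∈ Finset.image List.ofFn (PK m (l i).length)
      rw [hle, Finset.mem_image]
      exact ⟨q, hq, hqe.symm⟩
    · rintro ⟨s, hsum', himg⟩
      have hlen : ∀ i, (l i).length = s i := by
        intro i
        obtain ⟨q, hq, hqe⟩ := Finset.mem_image.mp (himg i)
        rw [← hqe, List.length_ofFn]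
      constructor
      · intro i
        rw [mem_PKL]
        obtain ⟨q, hq, hqe⟩ := Finset.mem_image.mp (himg i)
        refine ⟨s i, ?_, q, hq, hqe.symm⟩
        have : s i ≤ ∑ j, s j := Finset.single_le_sum (f := s)
          (fun _ _ => Nat.zero_le _) (Finset.mem_univ i)
        omega
      · rw [Finset.sum_congr rfl (fun i _ => hlen i), hsum']
  rw [hTT, Finset.sum_biUnion]
  · refine Finset.sum_congr rfl (fun s hs => ?_)
    rw [← Finset.prod_univ_sum]
    refine Finset.prod_congr rfl (fun i _ => ?_)
    rw [Finset.sum_image (fun q _ q' _ h => List.ofFn_injective h)]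
  · -- pairwise disjoint
    intro s hs s' hs' hne
    simp only [Function.onFun]
    rw [Finset.disjoint_left]
    intro l hl hl'
    rw [Fintype.mem_piFinset] at hl hl'
    apply hne
    funext i
    obtain ⟨q, hq, hqe⟩ := Finset.mem_image.mp (hl i)
    obtain ⟨q', hq', hqe'⟩ := Finset.mem_image.mp (hl' i)
    have e1 : (l i).length = s i := by rw [← hqe, List.length_ofFn]
    have e2 : (l i).length = s' i := by rw [← hqe', List.length_ofFn]
    omega

end Glue


-- ================== antidiagonal helper lemmas ==================

lemma sum_adT_succ {β : Type} [AddCommMonoid β] (t N : ℕ) (f : (Fin (t + 1) → ℕ) → β) :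
    ∑ s ∈ Finset.Nat.antidiagonalTuple (t + 1) N, f s =
    ∑ ab ∈ Finset.HasAntidiagonal.antidiagonal N, ∑ s' ∈ Finset.Nat.antidiagonalTuple t ab.2,
      f (Fin.cons ab.1 s') := by
  rw [Finset.sum_sigma' (Finset.HasAntidiagonal.antidiagonal N)
    (fun ab => Finset.Nat.antidiagonalTuple t ab.2) (fun ab s' => f (Fin.cons ab.1 s'))]
  apply Finset.sum_nbij' (i := fun s => (⟨(s 0, ∑ i : Fin t, s i.succ), Fin.tail s⟩ :
      (ab : ℕ × ℕ) × (Fin t → ℕ))) (j := fun z => Fin.cons z.1.1 z.2)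
  · intro s hs
    rw [Finset.Nat.mem_antidiagonalTuple] at hs
    rw [Finset.mem_sigma]
    constructor
    · rw [Finset.HasAntidiagonal.mem_antidiagonal]
      show s 0 + ∑ i : Fin t, s i.succ = N
      rw [← hs, Fin.sum_univ_succ]
    · rw [Finset.Nat.mem_antidiagonalTuple]
      rfl
  · intro z hz
    rw [Finset.mem_sigma] at hz
    have h1 : z.fst.1 + z.fst.2 = N := Finset.HasAntidiagonal.mem_antidiagonal.mp hz.1
    have h2 : ∑ i : Fin t, z.snd i = z.fst.2 := Finset.Nat.mem_antidiagonalTuple.mp hz.2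
    rw [Finset.Nat.mem_antidiagonalTuple, Fin.sum_cons, h2]
    exact h1
  · intro s _
    exact Fin.cons_self_tail s
  · rintro ⟨⟨a, b⟩, s'⟩ hz
    rw [Finset.mem_sigma] at hz
    have h2 : ∑ i : Fin t, s' i = b := Finset.Nat.mem_antidiagonalTuple.mp hz.2
    subst h2
    rfl
  · intro s _
    exact congrArg f (Fin.cons_self_tail s).symm

lemma sum_ad_succ {β : Type} [AddCommMonoid β] (N : ℕ) (F : ℕ → ℕ → β) :
    ∑ ab ∈ Finset.HasAntidiagonal.antidiagonal (N + 1), F ab.1 ab.2 =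
      F 0 (N + 1) + ∑ ab ∈ Finset.HasAntidiagonal.antidiagonal N, F (ab.1 + 1) ab.2 := by
  rw [Finset.Nat.antidiagonal_succ, Finset.sum_cons, Finset.sum_map]
  rfl

lemma sum_ad_assoc {β : Type} [AddCommMonoid β] (N : ℕ) (G : ℕ → ℕ → ℕ → β) :
    ∑ ab ∈ Finset.HasAntidiagonal.antidiagonal N, ∑ xw ∈ Finset.HasAntidiagonal.antidiagonal ab.1, G xw.1 xw.2 ab.2 =
    ∑ wM ∈ Finset.HasAntidiagonal.antidiagonal N, ∑ xb ∈ Finset.HasAntidiagonal.antidiagonal wM.2, G xb.1 wM.1 xb.2 := by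
  rw [Finset.sum_sigma' (Finset.HasAntidiagonal.antidiagonal N) (fun ab => Finset.HasAntidiagonal.antidiagonal ab.1)
    (fun ab xw => G xw.1 xw.2 ab.2)]
  rw [Finset.sum_sigma' (Finset.HasAntidiagonal.antidiagonal N) (fun wM => Finset.HasAntidiagonal.antidiagonal wM.2)
    (fun wM xb => G xb.1 wM.1 xb.2)]
  apply Finset.sum_nbij' (i := fun z => (⟨(z.2.2, z.2.1 + z.1.2), (z.2.1, z.1.2)⟩ :
      (wM : ℕ × ℕ) × (ℕ × ℕ))) (j := fun z => ⟨(z.2.1 + z.1.1, z.2.2), (z.2.1, z.1.1)⟩)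
  · rintro ⟨⟨a, b⟩, ⟨x, w⟩⟩ hz
    rw [Finset.mem_sigma] at hz
    have h1 : a + b = N := Finset.HasAntidiagonal.mem_antidiagonal.mp hz.1
    have h2 : x + w = a := Finset.HasAntidiagonal.mem_antidiagonal.mp hz.2
    rw [Finset.mem_sigma]
    constructor
    · rw [Finset.HasAntidiagonal.mem_antidiagonal]
      show w + (x + b) = N
      omega
    · rw [Finset.HasAntidiagonal.mem_antidiagonal]
  · rintro ⟨⟨w, M⟩, ⟨x, b⟩⟩ hz
    rw [Finset.mem_sigma] at hz
    have h1 : w + M = N := Finset.HasAntidiagonal.mem_antidiagonal.mp hz.1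
    have h2 : x + b = M := Finset.HasAntidiagonal.mem_antidiagonal.mp hz.2
    rw [Finset.mem_sigma]
    constructor
    · rw [Finset.HasAntidiagonal.mem_antidiagonal]
      show x + w + b = N
      omega
    · rw [Finset.HasAntidiagonal.mem_antidiagonal]
  · rintro ⟨⟨a, b⟩, ⟨x, w⟩⟩ hz
    simp only [Finset.mem_sigma, Finset.HasAntidiagonal.mem_antidiagonal] at hz
    obtain ⟨h1, h2⟩ := hz
    obtain rfl : x + w = a := h2
    rfl
  · rintro ⟨⟨w, M⟩, ⟨x, b⟩⟩ hz
    simp only [Finset.mem_sigma, Finset.HasAntidiagonal.mem_antidiagonal] at hz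
    obtain ⟨h1, h2⟩ := hz
    obtain rfl : x + b = M := h2
    rfl
  · rintro ⟨⟨a, b⟩, ⟨x, w⟩⟩ hz
    rfl

/-- the number of `m`-tuples of parking distributions with total size `w` -/
def W (m w : ℕ) : ℕ :=
  ∑ s ∈ Finset.Nat.antidiagonalTuple m w, ∏ i : Fin m, (PK m (s i)).card

lemma G_symm (m N : ℕ) (α : Fin (m + 1) → ℕ) (σ : Equiv.Perm (Fin (m + 1))) :
    ∑ s ∈ Finset.Nat.antidiagonalTuple (m + 1) N, ∏ i, Cnt m (s i) (α (σ i)) =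
    ∑ s ∈ Finset.Nat.antidiagonalTuple (m + 1) N, ∏ i, Cnt m (s i) (α i) := by
  apply Finset.sum_nbij' (i := fun s => s ∘ ⇑σ⁻¹) (j := fun s => s ∘ ⇑σ)
  · intro s hs
    rw [Finset.Nat.mem_antidiagonalTuple] at hs ⊢
    rw [← hs]
    exact Equiv.sum_comp σ⁻¹ s
  · intro s hs
    rw [Finset.Nat.mem_antidiagonalTuple] at hs ⊢
    rw [← hs]
    exact Equiv.sum_comp σ s
  · intro s _
    funext i
    simp
  · intro s _
    funext i
    simp
  · intro s _
    have := Equiv.prod_comp σ (fun i => Cnt m ((s ∘ ⇑σ⁻¹) i) (α i))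
    rw [← this]
    refine Finset.prod_congr rfl (fun i _ => ?_)
    simp

-- ================== consequences of the hypotheses ==================

section Stats

variable {m : ℕ} (hm : 1 ≤ m)
  (S : Fin (m + 1) → (n : ℕ) → (Fin n → ℕ) → ℕ) (c : Fin (m + 1) → ℕ)
  (hdist : ∀ (i : Fin (m + 1)) (n k : ℕ),
      ((PK m n).filter (fun p => S i n p = k)).card = Cnt m n k)
  (hrec : ∀ (i : Fin (m + 1)) (n : ℕ), 1 ≤ n → ∀ p ∈ PK m n,
      S i n p = S i (FRD m p (i : ℕ)).length (fun t => (FRD m p (i : ℕ)).get t) + c i)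

omit hm in
include hdist in
lemma S_zero (i : Fin (m + 1)) (p : Fin 0 → ℕ) : S i 0 p = 0 := by
  have hp : p = fun t : Fin 0 => t.elim0 := by funext t; exact t.elim0
  rw [hp]
  have h := hdist i 0 (S i 0 (fun t : Fin 0 => t.elim0))
  rw [PK_zero, Finset.filter_singleton, if_pos rfl, Finset.card_singleton,
    Cnt_zero_left] at h
  by_cases h0 : S i 0 (fun t : Fin 0 => t.elim0) = 0
  · exact h0
  · rw [if_neg h0] at h; omega

omit hm in
include hdist in
lemma S_le (i : Fin (m + 1)) (s : ℕ) {q : Fin s → ℕ} (hq : q ∈ PK m s) : S i s q ≤ s := by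
  by_contra hc
  push_neg at hc
  have h := hdist i s (S i s q)
  rw [Cnt_eq_zero_of_gt hc, Finset.card_eq_zero, Finset.filter_eq_empty_iff] at h
  exact h hq rfl

omit hm in
include hdist in
lemma S_congr (i : Fin (m + 1)) {n₁ n₂ : ℕ} (h : n₁ = n₂) (p₁ : Fin n₁ → ℕ) (p₂ : Fin n₂ → ℕ)
    (hp : ∀ t : Fin n₁, p₁ t = p₂ (Fin.cast h t)) : S i n₁ p₁ = S i n₂ p₂ := by
  subst h
  have hp2 : p₁ = p₂ := by
    funext t
    rw [hp t]
    rfl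
  rw [hp2]

omit hm in
include hdist in
lemma S_ofFn (i : Fin (m + 1)) (s : ℕ) (q : Fin s → ℕ) :
    S i (List.ofFn q).length (fun t => (List.ofFn q).get t) = S i s q := by
  apply S_congr S hdist i (List.length_ofFn (f := q))
  intro t
  exact List.get_ofFn q t

include hdist hrec in
lemma c_one (hm' : 1 ≤ m) (i : Fin (m + 1)) : c i = 1 := by
  have hp1 : (fun _ : Fin 1 => 1) ∈ PK m 1 := by rw [PK_one]; exact Finset.mem_singleton_self _
  have h := hrec i 1 le_rfl (fun _ => 1) hp1
  -- the FRD parts of the length-1 distribution are empty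
  have hlen : (FRD m (fun _ : Fin 1 => 1) (i : ℕ)).length = 0 := by
    rw [FRD_length]
    have h1 := ffixE_le m le_rfl (fun _ : Fin 1 => 1) ((i : ℕ) + 1)
    have h2 := two_le_ffixE m le_rfl (fun _ : Fin 1 => 1) (i : ℕ)
    omega
  have hS0 : S i (FRD m (fun _ : Fin 1 => 1) (i : ℕ)).length
      (fun t => (FRD m (fun _ : Fin 1 => 1) (i : ℕ)).get t) = 0 := by
    have h1 := S_congr S hdist i hlen
      (fun t => (FRD m (fun _ : Fin 1 => 1) (i : ℕ)).get t) (fun t : Fin 0 => t.elim0)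
      (fun t => (Fin.cast hlen t).elim0)
    rw [h1]
    exact S_zero S hdist i _
  -- S i 1 (const 1) = 1
  have hS1 : S i 1 (fun _ : Fin 1 => 1) = 1 := by
    have h := hdist i 1 (S i 1 (fun _ : Fin 1 => 1))
    rw [PK_one, Finset.filter_singleton, if_pos rfl, Finset.card_singleton,
      Cnt_one_left] at h
    by_cases h0 : S i 1 (fun _ : Fin 1 => 1) = 1
    · exact h0
    · rw [if_neg h0] at h; omega
  rw [hS1, hS0] at h
  omega

include hdist in
lemma sum_S_eq {β : Type} [CommSemiring β] (i : Fin (m + 1)) (s R : ℕ) (hsR : s < R)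
    (g : ℕ → β) :
    ∑ q ∈ PK m s, g (S i s q) = ∑ k ∈ Finset.range R, (Cnt m s k : β) * g k := by
  rw [← Finset.sum_fiberwise_of_maps_to (g := fun q => S i s q) (t := Finset.range R)
    (fun q hq => Finset.mem_range.mpr (lt_of_le_of_lt (S_le S hdist i s hq) hsR))
    (fun q => g (S i s q))]
  refine Finset.sum_congr rfl (fun k hk => ?_)
  have hcongr : ∀ q ∈ (PK m s).filter (fun q => S i s q = k), g (S i s q) = g k := by
    intro q hq
    rw [(Finset.mem_filter.mp hq).2]
  rw [Finset.sum_congr rfl hcongr, Finset.sum_const, hdist i s k, nsmul_eq_mul]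

omit hm in
include hdist hrec in
lemma Cnt_zero_right (hm' : 1 ≤ m) {n : ℕ} (hn : 1 ≤ n) : Cnt m n 0 = 0 := by
  rw [← hdist (0 : Fin (m + 1)) n 0, Finset.card_eq_zero, Finset.filter_eq_empty_iff]
  intro p hp
  rw [hrec (0 : Fin (m + 1)) n hn p hp, c_one S c hdist hrec hm']
  omega

include hdist hrec in
lemma Cnt_rec (hm' : 1 ≤ m) (n k : ℕ) (hn : 1 ≤ n) (hk : 1 ≤ k) :
    Cnt m n k = ∑ ab ∈ Finset.HasAntidiagonal.antidiagonal (n - 1), Cnt m ab.1 (k - 1) * W m ab.2 := by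
  classical
  set f : Fin (m + 1) → List ℕ → ℕ := fun i l =>
    if i = (0 : Fin (m + 1)) then
      (if S 0 l.length (fun t => l.get t) = k - 1 then 1 else 0) else 1 with hf
  have hterm : ∀ p ∈ PK m n, (if S 0 n p = k then (1 : ℕ) else 0) =
      ∏ i : Fin (m + 1), f i (FRD m p (i : ℕ)) := by
    intro p hp
    rw [Fin.prod_univ_succ]
    have hone : ∀ i : Fin m, f i.succ (FRD m p ((i.succ : Fin (m + 1)) : ℕ)) = 1 := by
      intro i
      rw [hf]
      simp only
      rw [if_neg (Fin.succ_ne_zero i)]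
    rw [Finset.prod_congr rfl (fun i _ => hone i), Finset.prod_const_one, mul_one]
    have hr := hrec 0 n hn p hp
    rw [c_one S c hdist hrec hm'] at hr
    have hiff : (S 0 n p = k) ↔
        ((S 0 (FRD m p ((0 : Fin (m + 1)) : ℕ)).length
          fun t => (FRD m p ((0 : Fin (m + 1)) : ℕ)).get t) = k - 1) := by
      constructor
      · intro h; omega
      · intro h; omega
    rw [if_congr hiff rfl rfl, hf]
    simp
  have hL : Cnt m n k = ∑ p ∈ PK m n, ∏ i : Fin (m + 1), f i (FRD m p (i : ℕ)) := by
    rw [← hdist 0 n k, Finset.card_filter]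
    exact Finset.sum_congr rfl hterm
  rw [hL, master_sum m n hm' hn f]
  have hfactor : ∀ s ∈ Finset.Nat.antidiagonalTuple (m + 1) (n - 1),
      (∏ i : Fin (m + 1), ∑ q ∈ PK m (s i), f i (List.ofFn q)) =
      Cnt m (s 0) (k - 1) * ∏ i : Fin m, (PK m (s i.succ)).card := by
    intro s hs
    rw [Fin.prod_univ_succ]
    congr 1
    · -- head factor
      have hq : ∀ q ∈ PK m (s 0), f (0 : Fin (m + 1)) (List.ofFn q) =
          (if S 0 (s 0) q = k - 1 then 1 else 0) := by
        intro q _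
        have hcast := S_ofFn S hdist (0 : Fin (m + 1)) (s 0) q
        rw [hf]
        simp only [eq_self_iff_true, if_true, hcast]
      rw [Finset.sum_congr rfl hq, ← Finset.card_filter, hdist 0 (s 0) (k - 1)]
    · refine Finset.prod_congr rfl (fun i _ => ?_)
      have hq : ∀ q ∈ PK m (s i.succ), f i.succ (List.ofFn q) = 1 := by
        intro q _
        rw [hf]
        simp only
        rw [if_neg (Fin.succ_ne_zero i)]
      rw [Finset.sum_congr rfl hq, Finset.sum_const, smul_eq_mul, mul_one]
  rw [Finset.sum_congr rfl hfactor]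
  rw [sum_adT_succ m (n - 1) (fun s => Cnt m (s 0) (k - 1) * ∏ i : Fin m, (PK m (s i.succ)).card)]
  refine Finset.sum_congr rfl (fun ab _ => ?_)
  rw [W, Finset.mul_sum]
  refine Finset.sum_congr rfl (fun s' _ => ?_)
  rw [Fin.cons_zero]
  refine congrArg (fun z => Cnt m ab.1 (k - 1) * z) ?_
  exact Finset.prod_congr rfl (fun i _ => by rw [Fin.cons_succ])


omit hm in
lemma prod_Cnt_cons' (a : ℕ) (s' : Fin m → ℕ) (γ : Fin (m + 1) → ℕ) :
    ∏ i : Fin (m + 1), Cnt m ((Fin.cons a s' : Fin (m + 1) → ℕ) i) (γ i) =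
    Cnt m a (γ 0) * ∏ i : Fin m, Cnt m (s' i) (γ i.succ) := by
  rw [Fin.prod_univ_succ, Fin.cons_zero]
  refine congrArg (fun z => Cnt m a (γ 0) * z) ?_
  exact Finset.prod_congr rfl (fun i _ => by rw [Fin.cons_succ])

include hdist hrec in
lemma Cnt_conv (hm' : 1 ≤ m) : ∀ K N : ℕ, ∀ α : Fin (m + 1) → ℕ, (∑ i, α i) = K →
    (∑ s ∈ Finset.Nat.antidiagonalTuple (m + 1) N, ∏ i, Cnt m (s i) (α i)) = Cnt m N K := by
  intro K
  induction K using Nat.strong_induction_on with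
  | _ K IH =>
  intro N α hα
  rcases Nat.eq_zero_or_pos K with rfl | hK
  · -- K = 0
    have hall : ∀ i, α i = 0 := by
      intro i
      have h := Finset.single_le_sum (f := α) (fun j _ => Nat.zero_le (α j)) (Finset.mem_univ i)
      omega
    rcases Nat.eq_zero_or_pos N with rfl | hN
    · rw [Finset.Nat.antidiagonalTuple_zero_right, Finset.sum_singleton]
      have hone : ∀ i : Fin (m + 1), Cnt m ((0 : Fin (m + 1) → ℕ) i) (α i) = 1 := by
        intro i
        rw [Pi.zero_apply, hall i, Cnt_zero_left, if_pos rfl]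
      rw [Finset.prod_congr rfl (fun i _ => hone i), Finset.prod_const_one,
        Cnt_zero_left, if_pos rfl]
    · rw [Cnt_zero_right S c hdist hrec hm' hN]
      apply Finset.sum_eq_zero
      intro s hs
      rw [Finset.Nat.mem_antidiagonalTuple] at hs
      have hex : ∃ i, s i ≠ 0 := by
        by_contra hc
        push_neg at hc
        have : ∑ i, s i = 0 := Finset.sum_eq_zero (fun i _ => hc i)
        omega
      obtain ⟨i, hi⟩ := hex
      apply Finset.prod_eq_zero (Finset.mem_univ i)
      rw [hall i]
      exact Cnt_zero_right S c hdist hrec hm' (by omega)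
  · -- K ≥ 1
    have hex : ∃ j, α j ≠ 0 := by
      by_contra hc
      push_neg at hc
      have : ∑ i, α i = 0 := Finset.sum_eq_zero (fun i _ => hc i)
      omega
    obtain ⟨j, hj⟩ := hex
    obtain ⟨α', hα'def⟩ : ∃ α', α' = fun i => α ((Equiv.swap 0 j) i) := ⟨_, rfl⟩
    have hswap : (∑ s ∈ Finset.Nat.antidiagonalTuple (m + 1) N, ∏ i, Cnt m (s i) (α' i)) =
        ∑ s ∈ Finset.Nat.antidiagonalTuple (m + 1) N, ∏ i, Cnt m (s i) (α i) := by
      subst hα'def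
      exact G_symm m N α (Equiv.swap 0 j)
    rw [← hswap]
    have hα'0 : α' 0 ≠ 0 := by
      rw [hα'def]
      simpa [Equiv.swap_apply_left] using hj
    have hα'sum : ∑ i, α' i = K := by
      rw [hα'def]
      exact (Equiv.sum_comp (Equiv.swap 0 j) α).trans hα
    clear hswap hα'def hj hα
    rcases Nat.eq_zero_or_pos N with rfl | hN
    · rw [Finset.Nat.antidiagonalTuple_zero_right, Finset.sum_singleton,
        Cnt_zero_left, if_neg (by omega)]
      apply Finset.prod_eq_zero (Finset.mem_univ (0 : Fin (m + 1)))
      rw [Pi.zero_apply, Cnt_zero_left, if_neg hα'0]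
    · obtain ⟨N', rfl⟩ : ∃ N', N = N' + 1 := ⟨N - 1, by omega⟩
      rw [sum_adT_succ m (N' + 1) (fun s => ∏ i, Cnt m (s i) (α' i))]
      have hstep1 : ∀ ab : ℕ × ℕ,
          (∑ s' ∈ Finset.Nat.antidiagonalTuple m ab.2,
            ∏ i, Cnt m ((Fin.cons ab.1 s' : Fin (m + 1) → ℕ) i) (α' i))
          = Cnt m ab.1 (α' 0) * ∑ s' ∈ Finset.Nat.antidiagonalTuple m ab.2,
              ∏ i : Fin m, Cnt m (s' i) (α' i.succ) := by
        intro ab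
        rw [Finset.mul_sum]
        exact Finset.sum_congr rfl (fun s' _ => prod_Cnt_cons' ab.1 s' α')
      rw [Finset.sum_congr rfl (fun ab _ => hstep1 ab)]
      rw [sum_ad_succ N' (fun a b => Cnt m a (α' 0) *
        ∑ s' ∈ Finset.Nat.antidiagonalTuple m b, ∏ i : Fin m, Cnt m (s' i) (α' i.succ))]
      rw [Cnt_zero_left, if_neg hα'0, Nat.zero_mul, Nat.zero_add]
      have hstep2 : ∀ ab : ℕ × ℕ, Cnt m (ab.1 + 1) (α' 0) =
          ∑ xw ∈ Finset.HasAntidiagonal.antidiagonal ab.1, Cnt m xw.1 (α' 0 - 1) * W m xw.2 := by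
        intro ab
        have h := Cnt_rec S c hdist hrec hm' (ab.1 + 1) (α' 0) (by omega) (by omega)
        simpa using h
      calc ∑ ab ∈ Finset.HasAntidiagonal.antidiagonal N', Cnt m (ab.1 + 1) (α' 0) *
              ∑ s' ∈ Finset.Nat.antidiagonalTuple m ab.2, ∏ i : Fin m, Cnt m (s' i) (α' i.succ)
          = ∑ ab ∈ Finset.HasAntidiagonal.antidiagonal N', ∑ xw ∈ Finset.HasAntidiagonal.antidiagonal ab.1,
              (Cnt m xw.1 (α' 0 - 1) * W m xw.2) *
              ∑ s' ∈ Finset.Nat.antidiagonalTuple m ab.2,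
                ∏ i : Fin m, Cnt m (s' i) (α' i.succ) := by
            refine Finset.sum_congr rfl (fun ab _ => ?_)
            rw [hstep2 ab, Finset.sum_mul]
        _ = ∑ wM ∈ Finset.HasAntidiagonal.antidiagonal N', ∑ xb ∈ Finset.HasAntidiagonal.antidiagonal wM.2,
              (Cnt m xb.1 (α' 0 - 1) * W m wM.1) *
              ∑ s' ∈ Finset.Nat.antidiagonalTuple m xb.2,
                ∏ i : Fin m, Cnt m (s' i) (α' i.succ) :=
            sum_ad_assoc N' (fun x w b => (Cnt m x (α' 0 - 1) * W m w) *
              ∑ s' ∈ Finset.Nat.antidiagonalTuple m b, ∏ i : Fin m, Cnt m (s' i) (α' i.succ))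
        _ = ∑ wM ∈ Finset.HasAntidiagonal.antidiagonal N', W m wM.1 * Cnt m wM.2 (K - 1) := by
            refine Finset.sum_congr rfl (fun wM _ => ?_)
            have hcsum : (∑ i, (Fin.cons (α' 0 - 1) (fun i' : Fin m => α' i'.succ) :
                Fin (m + 1) → ℕ) i) = K - 1 := by
              rw [Fin.sum_cons]
              have h := hα'sum
              rw [Fin.sum_univ_succ] at h
              omega
            have hIH := IH (K - 1) (by omega) wM.2 _ hcsum
            rw [sum_adT_succ m wM.2 (fun s => ∏ i, Cnt m (s i)
              ((Fin.cons (α' 0 - 1) (fun i' : Fin m => α' i'.succ) : Fin (m + 1) → ℕ) i))] at hIH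
            rw [← hIH, Finset.mul_sum]
            refine Finset.sum_congr rfl (fun xb _ => ?_)
            rw [Finset.mul_sum, Finset.mul_sum]
            refine Finset.sum_congr rfl (fun s' _ => ?_)
            rw [prod_Cnt_cons' xb.1 s'
              (Fin.cons (α' 0 - 1) (fun i' : Fin m => α' i'.succ)), Fin.cons_zero]
            have hsucc : ∀ i : Fin m, (Fin.cons (α' 0 - 1) (fun i' : Fin m => α' i'.succ) :
                Fin (m + 1) → ℕ) i.succ = α' i.succ := fun i => Fin.cons_succ _ _ i
            have hpr : (∏ i : Fin m, Cnt m (s' i)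
                ((Fin.cons (α' 0 - 1) (fun i' : Fin m => α' i'.succ) : Fin (m + 1) → ℕ) i.succ))
                = ∏ i : Fin m, Cnt m (s' i) (α' i.succ) :=
              Finset.prod_congr rfl (fun i _ => by rw [hsucc i])
            rw [hpr]
            ring
        _ = Cnt m (N' + 1) K := by
            have h := Cnt_rec S c hdist hrec hm' (N' + 1) K (by omega) (by omega)
            rw [← Finset.Nat.sum_antidiagonal_swap
              (f := fun p => Cnt m p.1 (K - 1) * W m p.2)] at h
            simp only [Nat.add_sub_cancel] at h
            rw [h]
            refine Finset.sum_congr rfl (fun wM _ => ?_)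
            simp only [Prod.fst_swap, Prod.snd_swap]
            ring

end Stats


theorem stmt16 (m : ℕ) (hm : 1 ≤ m)
    (S : Fin (m + 1) → (n : ℕ) → (Fin n → ℕ) → ℕ) (c : Fin (m + 1) → ℕ)
    (hdist : ∀ (i : Fin (m + 1)) (n k : ℕ),
      ((PK m n).filter (fun p => S i n p = k)).card = Cnt m n k)
    (hrec : ∀ (i : Fin (m + 1)) (n : ℕ), 1 ≤ n → ∀ p ∈ PK m n,
      S i n p = S i (FRD m p (i : ℕ)).length (fun t => (FRD m p (i : ℕ)).get t) + c i)
    (n : ℕ) (hn : 1 ≤ n) :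
    ∑ p ∈ PK m n,
        ∏ i : Fin (m + 1), (MvPolynomial.X i : MvPolynomial (Fin (m + 1)) ℤ) ^ S i n p =
      (∏ i : Fin (m + 1), (MvPolynomial.X i : MvPolynomial (Fin (m + 1)) ℤ) ^ c i) *
        ∑ k ∈ Finset.range n, (Cnt m (n - 1) k : MvPolynomial (Fin (m + 1)) ℤ) *
          hfull (m + 1) k := by
  classical
  have hc : ∀ i : Fin (m + 1), c i = 1 := c_one S c hdist hrec hm
  have hRc : (∏ i : Fin (m + 1), (MvPolynomial.X i : MvPolynomial (Fin (m + 1)) ℤ) ^ c i)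
      = ∏ i : Fin (m + 1), (MvPolynomial.X i : MvPolynomial (Fin (m + 1)) ℤ) :=
    Finset.prod_congr rfl (fun i _ => by rw [hc i, pow_one])
  rw [hRc]
  have hterm : ∀ p ∈ PK m n,
      (∏ i : Fin (m + 1), (MvPolynomial.X i : MvPolynomial (Fin (m + 1)) ℤ) ^ S i n p)
      = (∏ i : Fin (m + 1), (MvPolynomial.X i : MvPolynomial (Fin (m + 1)) ℤ)) *
        ∏ i : Fin (m + 1), (MvPolynomial.X i : MvPolynomial (Fin (m + 1)) ℤ) ^
          (S i (FRD m p (i : ℕ)).length (fun t => (FRD m p (i : ℕ)).get t)) := by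
    intro p hp
    rw [← Finset.prod_mul_distrib]
    refine Finset.prod_congr rfl (fun i _ => ?_)
    rw [hrec i n hn p hp, hc i, pow_succ]
    ring
  rw [Finset.sum_congr rfl hterm, ← Finset.mul_sum]
  congr 1
  have hmaster := master_sum (β := MvPolynomial (Fin (m + 1)) ℤ) m n hm hn
    (fun i l => (MvPolynomial.X i : MvPolynomial (Fin (m + 1)) ℤ) ^
      (S i l.length (fun t => l.get t)))
  rw [hmaster]
  have hfac : ∀ s ∈ Finset.Nat.antidiagonalTuple (m + 1) (n - 1), ∀ i : Fin (m + 1),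
      (∑ q ∈ PK m (s i), (MvPolynomial.X i : MvPolynomial (Fin (m + 1)) ℤ) ^
        (S i (List.ofFn q).length (fun t => (List.ofFn q).get t)))
      = ∑ k ∈ Finset.range n, (Cnt m (s i) k : MvPolynomial (Fin (m + 1)) ℤ) *
          (MvPolynomial.X i) ^ k := by
    intro s hs i
    have hsi : s i < n := by
      rw [Finset.Nat.mem_antidiagonalTuple] at hs
      have h1 : s i ≤ ∑ j, s j := Finset.single_le_sum (f := s) (fun _ _ => Nat.zero_le _)
        (Finset.mem_univ i)
      omega
    have h2 : ∀ q ∈ PK m (s i), (MvPolynomial.X i : MvPolynomial (Fin (m + 1)) ℤ) ^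
        (S i (List.ofFn q).length (fun t => (List.ofFn q).get t)) =
        (MvPolynomial.X i) ^ (S i (s i) q) := by
      intro q _
      rw [S_ofFn S hdist i (s i) q]
    rw [Finset.sum_congr rfl h2]
    exact sum_S_eq S hdist i (s i) n hsi (fun k => (MvPolynomial.X i) ^ k)
  rw [Finset.sum_congr rfl (fun s hs => Finset.prod_congr rfl (fun i _ => hfac s hs i))]
  rw [Finset.sum_congr rfl (fun s _ => Finset.prod_univ_sum
    (fun _ : Fin (m + 1) => Finset.range n)
    (fun i k => (Cnt m (s i) k : MvPolynomial (Fin (m + 1)) ℤ) * (MvPolynomial.X i) ^ k))]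
  rw [Finset.sum_comm]
  have hαterm : ∀ α ∈ Fintype.piFinset (fun _ : Fin (m + 1) => Finset.range n),
      (∑ s ∈ Finset.Nat.antidiagonalTuple (m + 1) (n - 1),
        ∏ i : Fin (m + 1), (Cnt m (s i) (α i) : MvPolynomial (Fin (m + 1)) ℤ) *
          (MvPolynomial.X i) ^ (α i))
      = (Cnt m (n - 1) (∑ i, α i) : MvPolynomial (Fin (m + 1)) ℤ) *
          ∏ i : Fin (m + 1), (MvPolynomial.X i) ^ (α i) := by
    intro α _
    have hsplit : ∀ s : Fin (m + 1) → ℕ,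
        (∏ i : Fin (m + 1), (Cnt m (s i) (α i) : MvPolynomial (Fin (m + 1)) ℤ) *
          (MvPolynomial.X i) ^ (α i))
        = ((∏ i : Fin (m + 1), Cnt m (s i) (α i) : ℕ) : MvPolynomial (Fin (m + 1)) ℤ) *
          ∏ i : Fin (m + 1), (MvPolynomial.X i) ^ (α i) := by
      intro s
      rw [Finset.prod_mul_distrib, Nat.cast_prod]
    rw [Finset.sum_congr rfl (fun s _ => hsplit s), ← Finset.sum_mul, ← Nat.cast_sum,
      Cnt_conv S c hdist hrec hm (∑ i, α i) (n - 1) α rfl]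
  rw [Finset.sum_congr rfl hαterm]
  have hmaps : ∀ α ∈ Fintype.piFinset (fun _ : Fin (m + 1) => Finset.range n),
      (∑ i, α i) ∈ Finset.range ((m + 1) * (n - 1) + 1) := by
    intro α hα
    rw [Fintype.mem_piFinset] at hα
    rw [Finset.mem_range]
    have hbd : ∀ i : Fin (m + 1), α i ≤ n - 1 := by
      intro i
      have := hα i
      rw [Finset.mem_range] at this
      omega
    have h1 : ∑ i, α i ≤ ∑ _i : Fin (m + 1), (n - 1) :=
      Finset.sum_le_sum (fun i _ => hbd i)
    have h2 : ∑ _i : Fin (m + 1), (n - 1) = (m + 1) * (n - 1) := by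
      rw [Finset.sum_const, Finset.card_univ, Fintype.card_fin, smul_eq_mul]
    omega
  rw [← Finset.sum_fiberwise_of_maps_to (g := fun α : Fin (m + 1) → ℕ => ∑ i, α i)
    (t := Finset.range ((m + 1) * (n - 1) + 1)) hmaps
    (fun α => (Cnt m (n - 1) (∑ i, α i) : MvPolynomial (Fin (m + 1)) ℤ) *
      ∏ i : Fin (m + 1), (MvPolynomial.X i) ^ (α i))]
  have hfiber : ∀ k ∈ Finset.range ((m + 1) * (n - 1) + 1),
      (∑ α ∈ (Fintype.piFinset (fun _ : Fin (m + 1) => Finset.range n)).filter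
          (fun α => ∑ i, α i = k),
        (Cnt m (n - 1) (∑ i, α i) : MvPolynomial (Fin (m + 1)) ℤ) *
          ∏ i : Fin (m + 1), (MvPolynomial.X i) ^ (α i))
      = (Cnt m (n - 1) k : MvPolynomial (Fin (m + 1)) ℤ) *
        ∑ α ∈ (Fintype.piFinset (fun _ : Fin (m + 1) => Finset.range n)).filter
          (fun α => ∑ i, α i = k), ∏ i : Fin (m + 1), (MvPolynomial.X i) ^ (α i) := by
    intro k _
    rw [Finset.mul_sum]
    refine Finset.sum_congr rfl (fun α hα => ?_)
    rw [(Finset.mem_filter.mp hα).2]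
  rw [Finset.sum_congr rfl hfiber]
  have hsub : Finset.range n ⊆ Finset.range ((m + 1) * (n - 1) + 1) := by
    apply Finset.range_subset_range.mpr
    have h3 : n - 1 ≤ (m + 1) * (n - 1) := Nat.le_mul_of_pos_left _ (by omega)
    omega
  rw [← Finset.sum_subset hsub (fun k _ hknot => by
    rw [Finset.mem_range, not_lt] at hknot
    have h4 : Cnt m (n - 1) k = 0 := Cnt_eq_zero_of_gt (by omega)
    rw [h4, Nat.cast_zero, zero_mul])]
  refine Finset.sum_congr rfl (fun k hk => ?_)
  rw [Finset.mem_range] at hk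
  congr 1
  have hset : (Fintype.piFinset (fun _ : Fin (m + 1) => Finset.range n)).filter
      (fun α => ∑ i, α i = k) = Finset.Nat.antidiagonalTuple (m + 1) k := by
    ext α
    rw [Finset.mem_filter, Fintype.mem_piFinset, Finset.Nat.mem_antidiagonalTuple]
    constructor
    · rintro ⟨-, h⟩
      exact h
    · intro h
      refine ⟨fun i => ?_, h⟩
      rw [Finset.mem_range]
      have h5 : α i ≤ ∑ j, α j := Finset.single_le_sum (fun _ _ => Nat.zero_le _)
        (Finset.mem_univ i)
      omega
  rw [hset, hfull]

end
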